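/- Let ω = (−1+√3 i)/2, so that −ω² = (1+√3 i)/2 and ω both lie in the upper half-plane. Then λ(−ω²) = −ω², i.e. λ((1+√3 i)/2) = (1+√3 i)/2, and λ(ω) = −ω, i.e. λ((−1+√3 i)/2) = (1−√3 i)/2. -/

import Mathlib

noncomputable def theta00 (τ : ℂ) : ℂ :=
  ∑' n : ℤ, Complex.exp (Real.pi * Complex.I * (n : ℂ) ^ 2 * τ)

/-- Theta constant `θ01(τ) = ∑_{n∈ℤ} (−1)ⁿ exp(πi n² τ)`. -/
noncomputable def theta01 (τ : ℂ) : ℂ :=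
  ∑' n : ℤ, (-1 : ℂ) ^ n * Complex.exp (Real.pi * Complex.I * (n : ℂ) ^ 2 * τ)

/-- Theta constant `θ10(τ) = ∑_{n∈ℤ} exp(πi (n+1/2)² τ)`. -/
noncomputable def theta10 (τ : ℂ) : ℂ :=
  ∑' n : ℤ, Complex.exp (Real.pi * Complex.I * ((n : ℂ) + 1/2) ^ 2 * τ)

/-- The lambda function `λ(τ) = θ10(τ)⁴ / θ00(τ)⁴`. -/
noncomputable def lambdaFn (τ : ℂ) : ℂ := theta10 τ ^ 4 / theta00 τ ^ 4

/-- `ω = (−1 + √3 i)/2`, the primitive cube root of unity in the upper half-plane. -/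
noncomputable def omegaC : ℂ := (-1 + Real.sqrt 3 * Complex.I) / 2

section Aux

open Complex Real

lemma neg_one_zpow_sq' (n : ℤ) : (-1 : ℂ) ^ (n ^ 2) = (-1 : ℂ) ^ n := by
  rcases Int.even_or_odd n with h | h
  · have h2 : Even (n ^ 2) := by rw [sq]; exact h.mul_right n
    rw [h.neg_one_zpow, h2.neg_one_zpow]
  · have h2 : Odd (n ^ 2) := h.pow
    rw [h.neg_one_zpow, h2.neg_one_zpow]

lemma exp_pi_I_int' (n : ℤ) : Complex.exp (Real.pi * Complex.I * n) = (-1 : ℂ) ^ n := by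
  rw [mul_comm, Complex.exp_int_mul, Complex.exp_pi_mul_I]

lemma exp_pi_I_int_sq' (n : ℤ) :
    Complex.exp (Real.pi * Complex.I * (n : ℂ) ^ 2) = (-1 : ℂ) ^ n := by
  have : ((n ^ 2 : ℤ) : ℂ) = (n : ℂ) ^ 2 := by push_cast; ring
  rw [← this, exp_pi_I_int', neg_one_zpow_sq']

lemma theta00_eq (τ : ℂ) : theta00 τ = jacobiTheta₂ 0 τ := by
  refine tsum_congr fun n => ?_
  simp [jacobiTheta₂_term]

lemma theta01_eq (τ : ℂ) : theta01 τ = jacobiTheta₂ (1/2) τ := by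
  refine tsum_congr fun n => ?_
  rw [jacobiTheta₂_term, Complex.exp_add, ← exp_pi_I_int' n]
  congr 2
  ring

lemma theta10_eq (τ : ℂ) :
    theta10 τ = Complex.exp (Real.pi * Complex.I * τ / 4) * jacobiTheta₂ (τ/2) τ := by
  rw [jacobiTheta₂, ← tsum_mul_left]
  refine tsum_congr fun n => ?_
  rw [jacobiTheta₂_term, ← Complex.exp_add]
  congr 1
  ring

lemma theta00_add_one (τ : ℂ) : theta00 (τ + 1) = theta01 τ := by
  refine tsum_congr fun n => ?_
  rw [mul_add, Complex.exp_add, mul_one, exp_pi_I_int_sq', mul_comm]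

lemma theta01_add_one (τ : ℂ) : theta01 (τ + 1) = theta00 τ := by
  refine tsum_congr fun n => ?_
  rw [mul_add, Complex.exp_add, mul_one, exp_pi_I_int_sq', mul_comm ((-1:ℂ)^n),
    mul_assoc, ← zpow_add₀ (by norm_num : (-1:ℂ) ≠ 0), ← two_mul,
    Even.neg_one_zpow ⟨n, two_mul n⟩, mul_one]

lemma theta10_add_one (τ : ℂ) :
    theta10 (τ + 1) = Complex.exp (Real.pi * Complex.I / 4) * theta10 τ := by
  rw [theta10, theta10, ← tsum_mul_left]
  refine tsum_congr fun n => ?_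
  have h1 : Real.pi * Complex.I * ((n : ℂ) + 1/2) ^ 2 * (τ + 1)
      = Real.pi * Complex.I / 4 + Real.pi * Complex.I * ((n : ℂ) + 1/2) ^ 2 * τ
        + Real.pi * Complex.I * ((n^2 + n : ℤ) : ℂ) := by push_cast; ring
  have hev : Even (n ^ 2 + n) := by
    have := Int.even_mul_succ_self n
    rwa [show n * (n + 1) = n ^ 2 + n by ring] at this
  rw [h1, Complex.exp_add, Complex.exp_add, exp_pi_I_int', hev.neg_one_zpow, mul_one]

end Aux

/-- Special values of lambda at the centers of gravity of Schwarz's triangles. -/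
theorem lambda_omega_values :
    lambdaFn (-omegaC ^ 2) = -omegaC ^ 2 ∧
    lambdaFn ((1 + Real.sqrt 3 * Complex.I) / 2) = (1 + Real.sqrt 3 * Complex.I) / 2 ∧
    lambdaFn omegaC = -omegaC ∧
    lambdaFn ((-1 + Real.sqrt 3 * Complex.I) / 2) = (1 - Real.sqrt 3 * Complex.I) / 2 := by
  have h3 : (Real.sqrt 3 : ℂ) * (Real.sqrt 3 : ℂ) = 3 := by
    rw [← Complex.ofReal_mul, Real.mul_self_sqrt (by norm_num : (0:ℝ) ≤ 3)]
    norm_num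
  have key : omegaC ^ 2 + omegaC + 1 = 0 := by
    rw [omegaC]
    linear_combination ((Real.sqrt 3 : ℂ) * (Real.sqrt 3 : ℂ) / 4) * Complex.I_sq - (1/4 : ℂ) * h3
  have himpos : 0 < omegaC.im := by
    have him : omegaC.im = Real.sqrt 3 / 2 := by
      simp [omegaC, Complex.div_im, Complex.add_im]
    rw [him]; positivity
  have hω0 : omegaC ≠ 0 := by
    intro h
    rw [h] at key; norm_num at key
  have hω1 : omegaC + 1 ≠ 0 := by
    intro h
    rw [show omegaC = -1 by linear_combination h] at key
    norm_num at key
  have hs : -1 / omegaC = omegaC + 1 := by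
    field_simp
    linear_combination -key
  set c : ℂ := (-Complex.I * omegaC) ^ (1/2 : ℂ) with hc
  have hbase : -Complex.I * omegaC ≠ 0 := mul_ne_zero (neg_ne_zero.mpr Complex.I_ne_zero) hω0
  have hc0 : c ≠ 0 := by
    rw [hc, Ne, Complex.cpow_eq_zero_iff]
    tauto
  have hc2 : c ^ 2 = -Complex.I * omegaC := by
    rw [hc, sq, ← Complex.cpow_add _ _ hbase]
    norm_num
  have hc4 : c ^ 4 = omegaC + 1 := by
    have h4 : c ^ 4 = (c ^ 2) ^ 2 := by ring
    rw [h4, hc2]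
    linear_combination Complex.I_sq * omegaC ^ 2 - key
  have hc8 : c ^ 8 = omegaC := by
    have h8 : c ^ 8 = (c ^ 4) ^ 2 := by ring
    rw [h8, hc4]
    linear_combination key
  -- nonvanishing of theta00 at omegaC
  have hne : theta00 omegaC ≠ 0 := by
    have hb := norm_jacobiTheta_sub_one_le himpos
    have him : omegaC.im = Real.sqrt 3 / 2 := by
      simp [omegaC, Complex.div_im, Complex.add_im]
    have hr : Real.exp (-Real.pi * omegaC.im) ≤ 1 / 7 := by
      have h1 : Real.exp (-Real.pi * omegaC.im) ≤ Real.exp (-2) := by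
        apply Real.exp_le_exp.mpr
        rw [him]
        have hpi : (3.14 : ℝ) ≤ Real.pi := by
          linarith [Real.pi_gt_d6]
        have hsq : (1.7 : ℝ) ≤ Real.sqrt 3 := by
          rw [show (1.7:ℝ) = Real.sqrt (1.7^2) by rw [Real.sqrt_sq]; norm_num]
          apply Real.sqrt_le_sqrt; norm_num
        nlinarith
      have h2 : Real.exp (-2 : ℝ) ≤ 1 / 7 := by
        rw [Real.exp_neg, show Real.exp (2:ℝ) = Real.exp 1 ^ 2 by
          rw [← Real.exp_nat_mul]; norm_num]
        have h27 : (7 : ℝ) ≤ (Real.exp 1) ^ 2 := by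
          have := Real.exp_one_gt_d9
          nlinarith
        rw [inv_le_comm₀ (by positivity) (by norm_num)]
        linarith
      linarith
    have hbound : ‖jacobiTheta omegaC - 1‖ ≤ 1 / 3 := by
      refine hb.trans ?_
      have hrpos : (0:ℝ) ≤ Real.exp (-Real.pi * omegaC.im) := (Real.exp_pos _).le
      have h67 : (6/7 : ℝ) ≤ 1 - Real.exp (-Real.pi * omegaC.im) := by linarith
      have hq : 2 / (1 - Real.exp (-Real.pi * omegaC.im)) ≤ 7/3 := by
        rw [div_le_div_iff₀ (by linarith) (by norm_num)]
        linarith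
      calc 2 / (1 - Real.exp (-Real.pi * omegaC.im)) * Real.exp (-Real.pi * omegaC.im)
          ≤ (7/3) * (1/7) := by
            apply mul_le_mul hq hr hrpos (by norm_num)
        _ = 1/3 := by norm_num
    show jacobiTheta omegaC ≠ 0
    intro h
    rw [h] at hbound
    simp at hbound
    norm_num at hbound
  -- functional equation consequences
  have E1 : theta00 omegaC = 1 / c * theta01 omegaC := by
    rw [theta00_eq, jacobiTheta₂_functional_equation 0 omegaC, hs]
    rw [show ((0:ℂ) / omegaC) = 0 by simp,
      show (-↑Real.pi * Complex.I * (0:ℂ) ^ 2 / omegaC) = 0 by ring]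
    rw [Complex.exp_zero, mul_one]
    rw [← theta00_eq, theta00_add_one]
  have E2 : theta10 omegaC = 1 / c * theta00 omegaC := by
    rw [theta10_eq, jacobiTheta₂_functional_equation (omegaC/2) omegaC, hs]
    rw [show (omegaC / 2 / omegaC) = 1/2 by field_simp,
      show (-↑Real.pi * Complex.I * (omegaC/2) ^ 2 / omegaC)
          = -(Real.pi * Complex.I * omegaC / 4) by
        field_simp
        ring]
    rw [← theta01_eq, theta01_add_one]
    rw [hc, Complex.exp_neg]
    have := Complex.exp_ne_zero (Real.pi * Complex.I * omegaC / 4)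
    have hX : ((-Complex.I * omegaC) ^ (1/2 : ℂ)) ≠ 0 := hc ▸ hc0
    field_simp
  have hθ10ne : theta10 omegaC ≠ 0 := by
    rw [E2]
    exact mul_ne_zero (by simp [hc0]) hne
  -- lambda at omegaC
  have L1 : lambdaFn omegaC = -omegaC := by
    rw [lambdaFn, E2]
    rw [show (1 / c * theta00 omegaC) ^ 4 = theta00 omegaC ^ 4 / c ^ 4 by
      field_simp]
    rw [div_div, mul_comm (c ^ 4), ← div_div, div_self (pow_ne_zero 4 hne), hc4]
    rw [div_eq_iff hω1]
    linear_combination key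
  -- lambda at omegaC + 1
  have he4 : Complex.exp (Real.pi * Complex.I / 4) ^ 4 = -1 := by
    rw [← Complex.exp_nat_mul,
      show ((4:ℕ):ℂ) * (Real.pi * Complex.I / 4) = Real.pi * Complex.I by push_cast; ring,
      Complex.exp_pi_mul_I]
  have hθ01 : theta01 omegaC = c * theta00 omegaC := by
    rw [E1, ← mul_assoc, mul_one_div, div_self hc0, one_mul]
  have hc4ne : c ^ 4 ≠ 0 := pow_ne_zero _ hc0
  have L2 : lambdaFn (omegaC + 1) = omegaC + 1 := by
    have hnum : theta10 (omegaC + 1) ^ 4 = -(theta00 omegaC ^ 4) / c ^ 4 := by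
      rw [theta10_add_one, mul_pow, he4, E2]
      field_simp
    have hden : theta00 (omegaC + 1) ^ 4 = c ^ 4 * theta00 omegaC ^ 4 := by
      rw [theta00_add_one, hθ01, mul_pow]
    rw [lambdaFn, hnum, hden, div_div,
      div_eq_iff (mul_ne_zero hc4ne (mul_ne_zero hc4ne (pow_ne_zero _ hne)))]
    linear_combination (-(omegaC + 1) * theta00 omegaC ^ 4) * hc8 +
      (-(theta00 omegaC ^ 4)) * key
  -- assemble
  have hneg : -omegaC ^ 2 = omegaC + 1 := by linear_combination -key
  have h2eq : ((1:ℂ) + Real.sqrt 3 * Complex.I) / 2 = omegaC + 1 := by rw [omegaC]; ring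
  have h4eq : ((1:ℂ) - Real.sqrt 3 * Complex.I) / 2 = -omegaC := by rw [omegaC]; ring
  refine ⟨by rw [hneg]; exact L2, by rw [h2eq]; exact L2, L1, ?_⟩
  rw [show ((-1:ℂ) + Real.sqrt 3 * Complex.I) / 2 = omegaC from rfl, h4eq]
  exact L1
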